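/- Let T = (P, D) be a σ-consistent probabilistic default theory with z-partition (D_0,…,D_k) and default ranking z. Then the probability ranking κ^z, defined by κ^z(Pr) = ∞ if Pr ⊭ P, κ^z(Pr) = 0 if Pr ⊨ P ∪ D, and κ^z(Pr) = 1 + max{z(d) : d ∈ D, Pr ⊭ d} otherwise, is admissible with T: κ^z(¬F) = ∞ for all F ∈ P, and for every default (ψ‖φ)[l,u] ∈ D, κ^z((φ|⊤)[1,1]) < ∞ and κ^z((φ|⊤)[1,1] ∧ (ψ|φ)[l,u]) < κ^z((φ|⊤)[1,1] ∧ ¬(ψ|φ)[l,u]). -/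

import Mathlib

open scoped Classical

/-- Classical propositional formulas over atoms `α`. -/
inductive PForm (α : Type) where
  | atom : α → PForm α
  | fls : PForm α
  | tru : PForm α
  | neg : PForm α → PForm α
  | conj : PForm α → PForm α → PForm α

/-- Satisfaction of a classical formula in a possible world `I : α → Bool`. -/
def PForm.sat {α : Type} (I : α → Bool) : PForm α → Bool
  | .atom a => I a
  | .fls => false
  | .tru => true
  | .neg φ => !(PForm.sat I φ)
  | .conj φ ψ => PForm.sat I φ && PForm.sat I ψ

/-- Material implication. -/
def PForm.imp {α : Type} (φ ψ : PForm α) : PForm α := .neg (.conj φ (.neg ψ))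

/-- A probabilistic interpretation: a probability function on possible worlds. -/
structure PInterp (α : Type) [Fintype α] [DecidableEq α] where
  p : (α → Bool) → ℝ
  nonneg : ∀ I, 0 ≤ p I
  sum_one : ∑ I : α → Bool, p I = 1

variable {α : Type} [Fintype α] [DecidableEq α]

/-- Probability of a classical formula. -/
noncomputable def PInterp.prob (Pr : PInterp α) (φ : PForm α) : ℝ :=
  ∑ I ∈ Finset.univ.filter (fun I : α → Bool => PForm.sat I φ = true), Pr.p I

/-- Conditional probability `Pr(ψ|φ)`. -/
noncomputable def PInterp.cond (Pr : PInterp α) (ψ φ : PForm α) : ℝ :=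
  Pr.prob (PForm.conj ψ φ) / Pr.prob φ

/-- A conditional constraint `(cons|ante)[lo,up]` (strict or defeasible). -/
structure CC (α : Type) where
  cons : PForm α
  ante : PForm α
  lo : ℝ
  up : ℝ

/-- Truth of a conditional constraint in a probabilistic interpretation. -/
def satCC (Pr : PInterp α) (c : CC α) : Prop :=
  Pr.prob c.ante = 0 ∨ (c.lo ≤ Pr.cond c.cons c.ante ∧ Pr.cond c.cons c.ante ≤ c.up)

/-- Probabilistic formulas: closure of conditional constraints under ¬ and ∧. -/
inductive ProbForm (α : Type) where
  | cc : CC α → ProbForm α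
  | neg : ProbForm α → ProbForm α
  | conj : ProbForm α → ProbForm α → ProbForm α

/-- Truth of probabilistic formulas. -/
def psat (Pr : PInterp α) : ProbForm α → Prop
  | .cc c => satCC Pr c
  | .neg F => ¬ psat Pr F
  | .conj F G => psat Pr F ∧ psat Pr G

/-- `Pr` is a model of a set of probabilistic formulas. -/
def modelsSet (Pr : PInterp α) (F : Set (ProbForm α)) : Prop := ∀ G ∈ F, psat Pr G

/-- `Pr` is a model of a finite set of conditional constraints. -/
def modelsF (Pr : PInterp α) (S : Finset (CC α)) : Prop := ∀ c ∈ S, satCC Pr c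

/-- `Pr` verifies a default. -/
def verifies (Pr : PInterp α) (c : CC α) : Prop :=
  Pr.prob c.ante = 1 ∧ c.lo ≤ Pr.cond c.cons c.ante ∧ Pr.cond c.cons c.ante ≤ c.up

/-- `D` tolerates `d` under `P`. -/
def tolerates (P D : Finset (CC α)) (d : CC α) : Prop :=
  ∃ Pr : PInterp α, modelsF Pr (P ∪ D) ∧ verifies Pr d

/-- `D` is under `P` in conflict with `d`. -/
def inConflict (P D : Finset (CC α)) (d : CC α) : Prop := ¬ tolerates P D d

/-- A default ranking admissible with `T = (P, D)`. -/
def rankAdmissible (P D : Finset (CC α)) (σ : CC α → ℕ) : Prop :=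
  ∀ D' ⊆ D, ∀ d ∈ D, inConflict P D' d → ∃ d' ∈ D', σ d' < σ d

/-- A priority ordering admissible with `T = (P, D)`. -/
def precAdmissible (P D : Finset (CC α)) (prec : CC α → CC α → Prop) : Prop :=
  ∀ D' ⊆ D, ∀ d ∈ D, inConflict P D' d → ∃ d' ∈ D', prec d' d

/-- The remainders in the construction of the z-partition. -/
noncomputable def restD (P D : Finset (CC α)) : ℕ → Finset (CC α)
  | 0 => D
  | i + 1 => (restD P D i).filter (fun d => ¬ tolerates P (restD P D i) d)

/-- The `i`-th member `D_i` of the z-partition. -/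
noncomputable def stratum (P D : Finset (CC α)) (i : ℕ) : Finset (CC α) :=
  (restD P D i).filter (fun d => tolerates P (restD P D i) d)

/-- σ-consistency: the z-partition covers all of `D`. -/
def zConsistent (P D : Finset (CC α)) : Prop := ∀ d ∈ D, ∃ i, d ∈ stratum P D i

/-- The default ranking `z` induced by the z-partition. -/
noncomputable def zrank (P D : Finset (CC α)) (d : CC α) : ℕ :=
  sInf {i | d ∈ stratum P D i}

/-- The probability ranking `κ^z`. -/
noncomputable def kappaZ (P D : Finset (CC α)) (Pr : PInterp α) : ℕ∞ :=
  if ¬ modelsF Pr P then ⊤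
  else if modelsF Pr (P ∪ D) then 0
  else 1 + ((D.filter (fun d => ¬ satCC Pr d)).sup (fun d => (zrank P D d : ℕ∞)))

/-- Extension of `κ^z` to strict probabilistic formulas. -/
noncomputable def kappaZF (P D : Finset (CC α)) (F : ProbForm α) : ℕ∞ :=
  sInf {n : ℕ∞ | ∃ Pr : PInterp α, psat Pr F ∧ kappaZ P D Pr = n}

/-- Number of defaults of the stratum `D_i` satisfied by `Pr`. -/
noncomputable def lexCard (P D : Finset (CC α)) (i : ℕ) (Pr : PInterp α) : ℕ :=
  ((stratum P D i).filter (fun d => satCC Pr d)).card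

/-- Lexicographic preference induced by the z-partition. -/
def lexPref (P D : Finset (CC α)) (Pr Pr' : PInterp α) : Prop :=
  ∃ i, lexCard P D i Pr' < lexCard P D i Pr ∧
    ∀ j, i < j → lexCard P D j Pr = lexCard P D j Pr'

/-- `≺`-preference on probabilistic interpretations. -/
def precPref (D : Finset (CC α)) (prec : CC α → CC α → Prop)
    (Pr Pr' : PInterp α) : Prop :=
  (D.filter fun d => ¬ satCC Pr d) ≠ (D.filter fun d => ¬ satCC Pr' d) ∧
  ∀ d ∈ D, ¬ satCC Pr d → satCC Pr' d →
    ∃ d' ∈ D, prec d d' ∧ satCC Pr d' ∧ ¬ satCC Pr' d'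

/-- Convex combination of two probabilistic interpretations. -/
noncomputable def mix (a : ℝ) (h0 : 0 ≤ a) (h1 : a ≤ 1) (Pr Pr' : PInterp α) :
    PInterp α where
  p I := a * Pr.p I + (1 - a) * Pr'.p I
  nonneg I := add_nonneg (mul_nonneg h0 (Pr.nonneg I))
    (mul_nonneg (by linarith) (Pr'.nonneg I))
  sum_one := by
    rw [Finset.sum_add_distrib, ← Finset.mul_sum, ← Finset.mul_sum,
      Pr.sum_one, Pr'.sum_one]
    ring

section Aux

variable {α : Type} [Fintype α] [DecidableEq α]

lemma prob_tru (Pr : PInterp α) : Pr.prob PForm.tru = 1 := by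
  unfold PInterp.prob
  rw [Finset.filter_true_of_mem (by intro I _; rfl)]
  exact Pr.sum_one

lemma prob_conj_tru (Pr : PInterp α) (φ : PForm α) :
    Pr.prob (PForm.conj φ PForm.tru) = Pr.prob φ := by
  unfold PInterp.prob
  congr 1
  apply Finset.filter_congr
  intro I _
  simp [PForm.sat]

lemma satA (Pr : PInterp α) (φ : PForm α) (h : Pr.prob φ = 1) :
    satCC Pr ⟨φ, PForm.tru, 1, 1⟩ := by
  right
  unfold PInterp.cond
  simp only [prob_tru, prob_conj_tru, h, div_one]
  exact ⟨le_refl 1, le_refl 1⟩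

lemma restD_succ_subset (P D : Finset (CC α)) (i : ℕ) :
    restD P D (i + 1) ⊆ restD P D i := by
  simp only [restD]
  exact Finset.filter_subset _ _

lemma restD_antitone (P D : Finset (CC α)) {m i : ℕ} (h : m ≤ i) :
    restD P D i ⊆ restD P D m := by
  induction h with
  | refl => exact Finset.Subset.refl _
  | step _ ih => exact fun x hx => ih (restD_succ_subset P D _ hx)

lemma stratum_subset (P D : Finset (CC α)) (i : ℕ) :
    stratum P D i ⊆ restD P D i := Finset.filter_subset _ _

lemma not_mem_restD_succ (P D : Finset (CC α)) {i : ℕ} {d : CC α}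
    (h : d ∈ stratum P D i) : d ∉ restD P D (i + 1) := by
  simp only [stratum, Finset.mem_filter] at h
  simp only [restD, Finset.mem_filter, not_and, not_not]
  intro _
  exact h.2

lemma mem_stratum_zrank (P D : Finset (CC α)) (hcons : zConsistent P D)
    {d : CC α} (hd : d ∈ D) : d ∈ stratum P D (zrank P D d) := by
  obtain ⟨i, hi⟩ := hcons d hd
  exact Nat.sInf_mem (⟨i, hi⟩ : {i | d ∈ stratum P D i}.Nonempty)

lemma zrank_lt_of_not_mem_restD (P D : Finset (CC α)) (hcons : zConsistent P D)
    {d : CC α} (hd : d ∈ D) {j : ℕ} (h : d ∉ restD P D j) :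
    zrank P D d < j := by
  by_contra hle
  push_neg at hle
  exact h (restD_antitone P D hle
    (stratum_subset P D _ (mem_stratum_zrank P D hcons hd)))

lemma kappaZ_le (P D : Finset (CC α)) (hcons : zConsistent P D)
    {Pr : PInterp α} {j : ℕ} (hm : modelsF Pr (P ∪ restD P D j)) :
    kappaZ P D Pr ≤ (j : ℕ∞) := by
  have hP : modelsF Pr P := fun c hc => hm c (Finset.mem_union_left _ hc)
  unfold kappaZ
  rw [if_neg (by simpa using hP)]
  by_cases hPD : modelsF Pr (P ∪ D)
  · rw [if_pos hPD]; exact zero_le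
  · rw [if_neg hPD]
    -- there exists a violated default in D
    have hviol : ∃ c ∈ D, ¬ satCC Pr c := by
      by_contra hno
      push_neg at hno
      exact hPD (fun c hc => by
        rcases Finset.mem_union.mp hc with h | h
        · exact hP c h
        · exact hno c h)
    obtain ⟨c, hcD, hcv⟩ := hviol
    have hcnot : c ∉ restD P D j := fun hmem =>
      hcv (hm c (Finset.mem_union_right _ hmem))
    have hclt : zrank P D c < j := zrank_lt_of_not_mem_restD P D hcons hcD hcnot
    obtain ⟨j', rfl⟩ : ∃ j', j = j' + 1 := ⟨j - 1, by omega⟩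
    set S := (D.filter (fun d => ¬ satCC Pr d)).sup
        (fun d => (zrank P D d : ℕ∞)) with hS
    have hsup : S ≤ (j' : ℕ∞) := by
      apply Finset.sup_le
      intro d hdmem
      rw [Finset.mem_filter] at hdmem
      have hdnot : d ∉ restD P D (j' + 1) := fun hmem =>
        hdmem.2 (hm d (Finset.mem_union_right _ hmem))
      have := zrank_lt_of_not_mem_restD P D hcons hdmem.1 hdnot
      exact_mod_cast Nat.lt_succ_iff.mp this
    calc 1 + S ≤ 1 + (j' : ℕ∞) := add_le_add_right hsup 1
      _ = ((j' + 1 : ℕ) : ℕ∞) := by push_cast; ring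

lemma kappaZ_ge (P D : Finset (CC α)) {Pr : PInterp α} {d : CC α}
    (hd : d ∈ D) (hv : ¬ satCC Pr d) :
    ((zrank P D d : ℕ∞) + 1) ≤ kappaZ P D Pr := by
  unfold kappaZ
  by_cases hP : modelsF Pr P
  · rw [if_neg (by simpa using hP)]
    have hPD : ¬ modelsF Pr (P ∪ D) := fun h =>
      hv (h d (Finset.mem_union_right _ hd))
    rw [if_neg hPD]
    have hmem : d ∈ D.filter (fun d => ¬ satCC Pr d) :=
      Finset.mem_filter.mpr ⟨hd, hv⟩
    have hle := Finset.le_sup (f := fun d => (zrank P D d : ℕ∞)) hmem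
    set S := (D.filter (fun d => ¬ satCC Pr d)).sup
        (fun d => (zrank P D d : ℕ∞)) with hS
    calc (zrank P D d : ℕ∞) + 1 = 1 + (zrank P D d : ℕ∞) := by ring
      _ ≤ 1 + S := add_le_add_right hle 1
  · rw [if_pos (by simpa using hP)]
    exact le_top

end Aux

theorem stmt10 {α : Type} [Fintype α] [DecidableEq α]
    (P D : Finset (CC α)) (hcons : zConsistent P D) :
    (∀ c ∈ P, kappaZF P D (ProbForm.neg (ProbForm.cc c)) = ⊤) ∧
    (∀ d ∈ D,
      kappaZF P D (ProbForm.cc ⟨d.ante, PForm.tru, 1, 1⟩) < ⊤ ∧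
      kappaZF P D (ProbForm.conj (ProbForm.cc ⟨d.ante, PForm.tru, 1, 1⟩)
          (ProbForm.cc d)) <
        kappaZF P D (ProbForm.conj (ProbForm.cc ⟨d.ante, PForm.tru, 1, 1⟩)
          (ProbForm.neg (ProbForm.cc d)))) := by
  constructor
  · intro c hc
    rw [kappaZF, sInf_eq_top]
    rintro n ⟨Pr, hsat, rfl⟩
    have hnc : ¬ satCC Pr c := hsat
    have hP : ¬ modelsF Pr P := fun h => hnc (h c hc)
    unfold kappaZ
    rw [if_pos hP]
  · intro d hd
    set j := zrank P D d with hj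
    -- witness interpretation from the tolerance at stratum j
    have hstr := mem_stratum_zrank P D hcons hd
    rw [stratum, Finset.mem_filter] at hstr
    obtain ⟨Pr, hm, hver⟩ := hstr.2
    obtain ⟨hante, hlo, hup⟩ := hver
    have hsatd : satCC Pr d := Or.inr ⟨hlo, hup⟩
    have hsatA : satCC Pr ⟨d.ante, PForm.tru, 1, 1⟩ := satA Pr d.ante hante
    have hκle : kappaZ P D Pr ≤ (j : ℕ∞) := kappaZ_le P D hcons hm
    have hjtop : (j : ℕ∞) < ⊤ := by
      exact_mod_cast WithTop.coe_lt_top j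
    constructor
    · apply lt_of_le_of_lt _ hjtop
      rw [kappaZF]
      exact sInf_le_of_le ⟨Pr, hsatA, rfl⟩ hκle
    · have hL : kappaZF P D (ProbForm.conj (ProbForm.cc ⟨d.ante, PForm.tru, 1, 1⟩)
          (ProbForm.cc d)) ≤ (j : ℕ∞) := by
        rw [kappaZF]
        exact sInf_le_of_le ⟨Pr, ⟨hsatA, hsatd⟩, rfl⟩ hκle
      have hR : ((j : ℕ∞) + 1) ≤ kappaZF P D
          (ProbForm.conj (ProbForm.cc ⟨d.ante, PForm.tru, 1, 1⟩)
            (ProbForm.neg (ProbForm.cc d))) := by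
        rw [kappaZF]
        apply le_sInf
        rintro n ⟨Pr', hsat', rfl⟩
        exact kappaZ_ge P D hd hsat'.2
      calc kappaZF P D (ProbForm.conj (ProbForm.cc ⟨d.ante, PForm.tru, 1, 1⟩)
            (ProbForm.cc d)) ≤ (j : ℕ∞) := hL
        _ < (j : ℕ∞) + 1 := by
            exact_mod_cast Nat.lt_succ_self j
        _ ≤ _ := hR
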